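/- arXiv:math/0111059 — 6 statements merged into one kernel-verified Lean document; each statement's English description precedes it below -/
import Mathlib

section
/- For all integers n ≥ k ≥ 1 and every π ∈ P(n,k), one has mak(π) = lmak'(π), i.e. ros(π) + lcs(π) = n(k−1) − (lcb(π) + rob(π)). -/
open Finset Polynomial

/-- A partition of `[n] = {1,…,n}` into `k` nonempty blocks `B₁-⋯-B_k`, indexed so that
`min B₁ < ⋯ < min B_k`, encoded by its restricted-growth word `w : Fin n → Fin k`
(the element `i+1` of `[n]` lies in the block `B_{w i + 1}`). -/
structure SetPartition (n k : ℕ) where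
  w : Fin n → Fin k
  surj : Function.Surjective w
  rgf : ∀ i : Fin n, ∀ c : Fin k, c < w i → ∃ j : Fin n, j < i ∧ w j = c

namespace SetPartition

variable {n k : ℕ}

instance : DecidableEq (SetPartition n k) := fun a b =>
  decidable_of_iff (a.w = b.w) (by cases a; cases b; simp)

noncomputable instance : Fintype (SetPartition n k) :=
  Fintype.ofInjective (fun π => π.w) (fun a b h => by cases a; cases b; simp_all)

/-- The set of openers (smallest elements of their blocks). -/
def openers (π : SetPartition n k) : Finset (Fin n) :=
  univ.filter fun i => ∀ j, j < i → π.w j ≠ π.w i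

/-- The set of closers (largest elements of their blocks). -/
def closers (π : SetPartition n k) : Finset (Fin n) :=
  univ.filter fun i => ∀ j, i < j → π.w j ≠ π.w i

/-- Closers that are not openers (`F_s`). -/
def closersOnly (π : SetPartition n k) : Finset (Fin n) := π.closers \ π.openers

/-- Openers that are not closers (`O_s`). -/
def openersOnly (π : SetPartition n k) : Finset (Fin n) := π.openers \ π.closers

/-- Elements that are neither openers nor closers (`P`, the transients). -/
def transients (π : SetPartition n k) : Finset (Fin n) :=
  univ \ (π.openers ∪ π.closers)

def ros (π : SetPartition n k) : ℕ :=
  ∑ i, (π.openers.filter fun j => j < i ∧ π.w i < π.w j).card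
def rob (π : SetPartition n k) : ℕ :=
  ∑ i, (π.openers.filter fun j => i < j ∧ π.w i < π.w j).card
def rcs (π : SetPartition n k) : ℕ :=
  ∑ i, (π.closers.filter fun j => j < i ∧ π.w i < π.w j).card
def rcb (π : SetPartition n k) : ℕ :=
  ∑ i, (π.closers.filter fun j => i < j ∧ π.w i < π.w j).card
def los (π : SetPartition n k) : ℕ :=
  ∑ i, (π.openers.filter fun j => j < i ∧ π.w j < π.w i).card
def lob (π : SetPartition n k) : ℕ :=
  ∑ i, (π.openers.filter fun j => i < j ∧ π.w j < π.w i).card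
def lcs (π : SetPartition n k) : ℕ :=
  ∑ i, (π.closers.filter fun j => j < i ∧ π.w j < π.w i).card
def lcb (π : SetPartition n k) : ℕ :=
  ∑ i, (π.closers.filter fun j => i < j ∧ π.w j < π.w i).card

def mak (π : SetPartition n k) : ℕ := π.ros + π.lcs
def mak' (π : SetPartition n k) : ℕ := π.lob + π.rcb
def lmak (π : SetPartition n k) : ℤ :=
  (n : ℤ) * ((k : ℤ) - 1) - ((π.los : ℤ) + (π.rcs : ℤ))
def lmak' (π : SetPartition n k) : ℤ :=
  (n : ℤ) * ((k : ℤ) - 1) - ((π.lcb : ℤ) + (π.rob : ℤ))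

/-- `rinv(b,π) = #{a : a < b, w_a > w_b}`. -/
def rinv (π : SetPartition n k) (b : Fin n) : ℕ :=
  (univ.filter fun a => a < b ∧ π.w b < π.w a).card

/-- `nrinv(b,π) = #{a : a > b, w_a > w_b}`. -/
def nrinv (π : SetPartition n k) (b : Fin n) : ℕ :=
  (univ.filter fun a => b < a ∧ π.w b < π.w a).card

/-- `linv(b,π) = #{a : a > b, w_a < w_b}`. -/
def linv (π : SetPartition n k) (b : Fin n) : ℕ :=
  (univ.filter fun a => b < a ∧ π.w a < π.w b).card

/-- `rinv(X,π) = Σ_{b ∈ X} rinv(b,π)`. -/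
def rinvSet (π : SetPartition n k) (X : Finset (Fin n)) : ℕ := ∑ b ∈ X, π.rinv b

/-- `linv(X,π) = Σ_{b ∈ X} linv(b,π)`. -/
def linvSet (π : SetPartition n k) (X : Finset (Fin n)) : ℕ := ∑ b ∈ X, π.linv b

/-- `g(B_c)`: the largest element of the block with index `c`. -/
def blockMax (π : SetPartition n k) (c : Fin k) : Fin n :=
  (univ.filter fun i => π.w i = c).max' (by
    obtain ⟨i, hi⟩ := π.surj c
    exact ⟨i, mem_filter.2 ⟨mem_univ i, hi⟩⟩)

/-- The block with index `c` is incomplete at stage `m`, i.e. it meets the first `m`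
elements of `[n]` but is not contained in them. -/
def IncompleteAt (π : SetPartition n k) (m : ℕ) (c : Fin k) : Prop :=
  (∃ j : Fin n, (j : ℕ) < m ∧ π.w j = c) ∧ ∃ j : Fin n, m ≤ (j : ℕ) ∧ π.w j = c

instance (π : SetPartition n k) (m : ℕ) : DecidablePred (π.IncompleteAt m) := fun c =>
  inferInstanceAs (Decidable
    ((∃ j : Fin n, (j : ℕ) < m ∧ π.w j = c) ∧ ∃ j : Fin n, m ≤ (j : ℕ) ∧ π.w j = c))

/-- `l_i(π)`: the number of blocks incomplete at stage `i-1`; here the element `i` of `[n]`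
is represented by the index `i - 1 : Fin n`, so the first `i - 1` elements are those with
index `< i`. -/
def lTrace (π : SetPartition n k) (i : Fin n) : ℕ :=
  (univ.filter fun c => π.IncompleteAt (i : ℕ) c).card

/-- `γ_i(π)`: one plus the number of blocks incomplete at stage `i` lying to the left of the
block containing `i`. -/
def gammaTrace (π : SetPartition n k) (i : Fin n) : ℕ :=
  1 + (univ.filter fun c => π.IncompleteAt ((i : ℕ) + 1) c ∧ c < π.w i).card

end SetPartition

/-- The `q`-Stirling numbers of the second kind `S_q(n,k) ∈ ℤ[q]`, with
`S_q(n,k) = q^{k-1} S_q(n-1,k-1) + [k]_q S_q(n-1,k)`, `S_q(0,0) = 1`, and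
`S_q(n,k) = 0` when exactly one of `n,k` is zero (whence also for `k > n`). -/
noncomputable def qStirling : ℕ → ℕ → Polynomial ℤ
  | 0, 0 => 1
  | 0, _ + 1 => 0
  | _ + 1, 0 => 0
  | n + 1, k + 1 =>
      X ^ k * qStirling n k + (∑ i ∈ Finset.range (k + 1), X ^ i) * qStirling n (k + 1)

namespace SetPartition

variable {n k : ℕ}

lemma w_injOn_openers (π : SetPartition n k) :
    Set.InjOn π.w π.openers := by
  intro a ha b hb hab
  simp only [openers, coe_filter, Set.mem_setOf_eq, mem_univ, true_and] at ha hb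
  rcases lt_trichotomy a b with h | h | h
  · exact absurd hab (hb a h)
  · exact h
  · exact absurd hab.symm (ha b h)

lemma w_injOn_closers (π : SetPartition n k) :
    Set.InjOn π.w π.closers := by
  intro a ha b hb hab
  simp only [closers, coe_filter, Set.mem_setOf_eq, mem_univ, true_and] at ha hb
  rcases lt_trichotomy a b with h | h | h
  · exact absurd hab.symm (ha b h)
  · exact h
  · exact absurd hab (hb a h)

lemma image_openers (π : SetPartition n k) : π.openers.image π.w = univ := by
  apply Finset.eq_univ_of_forall
  intro c
  obtain ⟨i, hi⟩ := π.surj c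
  set s : Finset (Fin n) := univ.filter fun j => π.w j = c with hs
  have hne : s.Nonempty := ⟨i, by simp [hs, hi]⟩
  have hwm : π.w (s.min' hne) = c := (mem_filter.1 (s.min'_mem hne)).2
  refine mem_image.2 ⟨s.min' hne, ?_, hwm⟩
  simp only [openers, mem_filter, mem_univ, true_and]
  intro j hj hw
  have hj' : j ∈ s := by rw [hs]; exact mem_filter.2 ⟨mem_univ _, hw.trans hwm⟩
  exact absurd (s.min'_le j hj') (not_le.2 hj)

lemma image_closers (π : SetPartition n k) : π.closers.image π.w = univ := by
  apply Finset.eq_univ_of_forall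
  intro c
  obtain ⟨i, hi⟩ := π.surj c
  set s : Finset (Fin n) := univ.filter fun j => π.w j = c with hs
  have hne : s.Nonempty := ⟨i, by simp [hs, hi]⟩
  have hwm : π.w (s.max' hne) = c := (mem_filter.1 (s.max'_mem hne)).2
  refine mem_image.2 ⟨s.max' hne, ?_, hwm⟩
  simp only [closers, mem_filter, mem_univ, true_and]
  intro j hj hw
  have hj' : j ∈ s := by rw [hs]; exact mem_filter.2 ⟨mem_univ _, hw.trans hwm⟩
  exact absurd (s.le_max' j hj') (not_le.2 hj)

lemma card_openers_filter (π : SetPartition n k) (p : Fin k → Prop) [DecidablePred p] :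
    (π.openers.filter fun j => p (π.w j)).card = (univ.filter p).card := by
  have h1 : (π.openers.filter fun j => p (π.w j)).image π.w
      = (π.openers.image π.w).filter p := (Finset.filter_image).symm
  have h2 : ((π.openers.filter fun j => p (π.w j)).image π.w).card
      = (π.openers.filter fun j => p (π.w j)).card :=
    Finset.card_image_of_injOn (π.w_injOn_openers.mono (by
      intro x hx; exact Finset.mem_coe.2 (Finset.mem_of_mem_filter x (Finset.mem_coe.1 hx))))
  rw [← h2, h1, image_openers]

lemma card_closers_filter (π : SetPartition n k) (p : Fin k → Prop) [DecidablePred p] :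
    (π.closers.filter fun j => p (π.w j)).card = (univ.filter p).card := by
  have h1 : (π.closers.filter fun j => p (π.w j)).image π.w
      = (π.closers.image π.w).filter p := (Finset.filter_image).symm
  have h2 : ((π.closers.filter fun j => p (π.w j)).image π.w).card
      = (π.closers.filter fun j => p (π.w j)).card :=
    Finset.card_image_of_injOn (π.w_injOn_closers.mono (by
      intro x hx; exact Finset.mem_coe.2 (Finset.mem_of_mem_filter x (Finset.mem_coe.1 hx))))
  rw [← h2, h1, image_closers]

lemma split_lt (s : Finset (Fin n)) (π : SetPartition n k) (i : Fin n) :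
    (s.filter fun j => j < i ∧ π.w i < π.w j).card
      + (s.filter fun j => i < j ∧ π.w i < π.w j).card
    = (s.filter fun j => π.w i < π.w j).card := by
  rw [← Finset.card_union_of_disjoint]
  · congr 1
    ext j
    simp only [mem_union, mem_filter]
    constructor
    · rintro (⟨h, h1, h2⟩ | ⟨h, h1, h2⟩) <;> exact ⟨h, h2⟩
    · rintro ⟨h, h2⟩
      rcases lt_trichotomy j i with h1 | h1 | h1
      · exact Or.inl ⟨h, h1, h2⟩
      · exact absurd h2 (by simp [h1])
      · exact Or.inr ⟨h, h1, h2⟩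
  · rw [Finset.disjoint_filter]
    rintro j _ ⟨h1, _⟩ ⟨h2, _⟩
    exact absurd h1 (not_lt.2 h2.le)

lemma split_gt (s : Finset (Fin n)) (π : SetPartition n k) (i : Fin n) :
    (s.filter fun j => j < i ∧ π.w j < π.w i).card
      + (s.filter fun j => i < j ∧ π.w j < π.w i).card
    = (s.filter fun j => π.w j < π.w i).card := by
  rw [← Finset.card_union_of_disjoint]
  · congr 1
    ext j
    simp only [mem_union, mem_filter]
    constructor
    · rintro (⟨h, h1, h2⟩ | ⟨h, h1, h2⟩) <;> exact ⟨h, h2⟩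
    · rintro ⟨h, h2⟩
      rcases lt_trichotomy j i with h1 | h1 | h1
      · exact Or.inl ⟨h, h1, h2⟩
      · exact absurd h2 (by simp [h1])
      · exact Or.inr ⟨h, h1, h2⟩
  · rw [Finset.disjoint_filter]
    rintro j _ ⟨h1, _⟩ ⟨h2, _⟩
    exact absurd h1 (not_lt.2 h2.le)

lemma fin_split (x : Fin k) :
    ((univ : Finset (Fin k)).filter fun c => x < c).card
      + ((univ : Finset (Fin k)).filter fun c => c < x).card + 1 = k := by
  have h1 : ((univ : Finset (Fin k)).filter fun c => x < c)
      ∪ ((univ : Finset (Fin k)).filter fun c => c < x) ∪ {x} = univ := by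
    ext c
    simp only [mem_union, mem_filter, mem_univ, true_and, mem_singleton]
    constructor
    · intro _; trivial
    · intro _
      rcases lt_trichotomy x c with h | h | h
      · exact Or.inl (Or.inl h)
      · exact Or.inr h.symm
      · exact Or.inl (Or.inr h)
  have h2 : Disjoint (((univ : Finset (Fin k)).filter fun c => x < c)
      ∪ ((univ : Finset (Fin k)).filter fun c => c < x)) ({x} : Finset (Fin k)) := by
    simp only [Finset.disjoint_singleton_right, mem_union, mem_filter]
    rintro (⟨_, h⟩ | ⟨_, h⟩) <;> exact absurd h (lt_irrefl x)
  have h3 : Disjoint ((univ : Finset (Fin k)).filter fun c => x < c)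
      ((univ : Finset (Fin k)).filter fun c => c < x) := by
    rw [Finset.disjoint_filter]
    intro c _ h1 h2
    exact absurd (h1.trans h2) (lt_irrefl x)
  have := congrArg Finset.card h1
  rw [Finset.card_union_of_disjoint h2, Finset.card_union_of_disjoint h3,
    Finset.card_singleton, Finset.card_univ, Fintype.card_fin] at this
  exact this

lemma key_sum (π : SetPartition n k) (hk : 1 ≤ k) :
    π.ros + π.rob + (π.lcs + π.lcb) + n = n * k := by
  unfold ros rob lcs lcb
  rw [← Finset.sum_add_distrib, ← Finset.sum_add_distrib, ← Finset.sum_add_distrib]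
  have : ∀ i : Fin n,
      ((π.openers.filter fun j => j < i ∧ π.w i < π.w j).card
        + (π.openers.filter fun j => i < j ∧ π.w i < π.w j).card)
      + ((π.closers.filter fun j => j < i ∧ π.w j < π.w i).card
        + (π.closers.filter fun j => i < j ∧ π.w j < π.w i).card)
      = k - 1 := by
    intro i
    rw [split_lt, split_gt, card_openers_filter π (fun c => π.w i < c),
      card_closers_filter π (fun c => c < π.w i)]
    have := fin_split (π.w i)
    omega
  rw [Finset.sum_congr rfl fun i _ => this i, Finset.sum_const, Finset.card_univ,
    Fintype.card_fin, smul_eq_mul]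
  obtain ⟨m, rfl⟩ := Nat.exists_eq_add_of_le hk
  simp [Nat.mul_add, Nat.mul_succ, Nat.add_comm, Nat.add_left_comm]

end SetPartition

/-- For all integers `n ≥ k ≥ 1` and every `π ∈ P(n,k)`,
`mak(π) = lmak'(π)`, i.e. `ros(π) + lcs(π) = n(k-1) - (lcb(π) + rob(π))`. -/
theorem mak_eq_lmak' (n k : ℕ) (hk : 1 ≤ k) (hkn : k ≤ n) (π : SetPartition n k) :
    ((π.ros : ℤ) + π.lcs = (n : ℤ) * ((k : ℤ) - 1) - ((π.lcb : ℤ) + π.rob)) ∧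
    (π.mak : ℤ) = π.lmak' := by
  have h := π.key_sum hk
  have h' : (π.ros : ℤ) + π.rob + (π.lcs + π.lcb) + n = n * k := by exact_mod_cast h
  constructor
  · push_cast; ring_nf; ring_nf at h'; linarith
  · unfold SetPartition.mak SetPartition.lmak'
    push_cast; ring_nf; ring_nf at h'; linarith
end

section
/- For all integers n ≥ k ≥ 1 and every π ∈ P(n,k), one has mak'(π) = lmak(π), i.e. lob(π) + rcb(π) = n(k−1) − (los(π) + rcs(π)). -/
open Finset Polynomial

section AuxMak
open SetPartition
variable {n k : ℕ}

private lemma card_openers_lt (π : SetPartition n k) (c : Fin k) :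
    ((π.openers.filter fun j => π.w j < c).card) = (c : ℕ) := by
  have : (c : ℕ) = (Finset.Iio c).card := by simp
  rw [this]
  apply Finset.card_bij (fun j _ => π.w j)
  · intro a ha
    simp only [mem_filter] at ha
    simpa using ha.2
  · intro a ha b hb hab
    simp only [SetPartition.openers, mem_filter, mem_univ, true_and] at ha hb
    rcases lt_trichotomy a b with h | h | h
    · exact absurd hab (hb.1 a h)
    · exact h
    · exact absurd hab.symm (ha.1 b h)
  · intro b hb
    simp only [mem_Iio] at hb
    have hne : (univ.filter fun j => π.w j = b).Nonempty := by
      obtain ⟨j, hj⟩ := π.surj b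
      exact ⟨j, by simp [hj]⟩
    set m := (univ.filter fun j => π.w j = b).min' hne with hm
    have hmw : π.w m = b := by
      have := Finset.min'_mem _ hne
      simpa using this
    refine ⟨m, ?_, hmw⟩
    simp only [mem_filter, SetPartition.openers, mem_univ, true_and]
    refine ⟨fun j hj hjw => ?_, by rw [hmw]; exact hb⟩
    have : m ≤ j := Finset.min'_le _ _ (by simp [hjw, hmw])
    exact absurd hj (not_lt.2 this)

private lemma card_closers_gt (π : SetPartition n k) (c : Fin k) :
    ((π.closers.filter fun j => c < π.w j).card) = k - 1 - (c : ℕ) := by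
  have hc : k - 1 - (c : ℕ) = (Finset.Ioi c).card := by
    simp [Fin.card_Ioi]
  rw [hc]
  apply Finset.card_bij (fun j _ => π.w j)
  · intro a ha
    simp only [mem_filter] at ha
    simpa using ha.2
  · intro a ha b hb hab
    simp only [SetPartition.closers, mem_filter, mem_univ, true_and] at ha hb
    rcases lt_trichotomy a b with h | h | h
    · exact absurd hab.symm (ha.1 b h)
    · exact h
    · exact absurd hab (hb.1 a h)
  · intro b hb
    simp only [mem_Ioi] at hb
    have hne : (univ.filter fun j => π.w j = b).Nonempty := by
      obtain ⟨j, hj⟩ := π.surj b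
      exact ⟨j, by simp [hj]⟩
    set m := (univ.filter fun j => π.w j = b).max' hne with hm
    have hmw : π.w m = b := by
      have := Finset.max'_mem _ hne
      simpa using this
    refine ⟨m, ?_, hmw⟩
    simp only [mem_filter, SetPartition.closers, mem_univ, true_and]
    refine ⟨fun j hj hjw => ?_, by rw [hmw]; exact hb⟩
    have : j ≤ m := Finset.le_max' _ _ (by simp [hjw, hmw])
    exact absurd hj (not_lt.2 this)

private lemma split_card {p q : Fin n → Prop} [DecidablePred p] [DecidablePred q]
    (s : Finset (Fin n)) (i : Fin n)
    (hq : ∀ j ∈ s, q j → j ≠ i) :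
    ((s.filter fun j => j < i ∧ q j).card + (s.filter fun j => i < j ∧ q j).card)
      = (s.filter q).card := by
  rw [← Finset.card_union_of_disjoint]
  · congr 1
    rw [← Finset.filter_or]
    apply Finset.filter_congr
    intro j hj
    constructor
    · rintro (⟨_, h⟩ | ⟨_, h⟩) <;> exact h
    · intro h
      rcases lt_trichotomy j i with hlt | heq | hgt
      · exact Or.inl ⟨hlt, h⟩
      · exact absurd heq (hq j hj h)
      · exact Or.inr ⟨hgt, h⟩
  · refine Finset.disjoint_left.2 fun a h1 h2 => ?_
    simp only [Finset.mem_filter] at h1 h2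
    exact absurd h2.2.1 (not_lt.2 h1.2.1.le)

private lemma key_sum (π : SetPartition n k) (hk : 1 ≤ k) :
    π.lob + π.rcb + π.los + π.rcs = n * (k - 1) := by
  have hper : ∀ i : Fin n,
      ((π.openers.filter fun j => i < j ∧ π.w j < π.w i).card
        + (π.closers.filter fun j => i < j ∧ π.w i < π.w j).card)
      + ((π.openers.filter fun j => j < i ∧ π.w j < π.w i).card
        + (π.closers.filter fun j => j < i ∧ π.w i < π.w j).card) = k - 1 := by
    intro i
    have ho := split_card (p := fun j => True) (q := fun j => π.w j < π.w i)
      π.openers i (fun j _ h => by rintro rfl; exact lt_irrefl _ h)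
    have hcl := split_card (p := fun j => True) (q := fun j => π.w i < π.w j)
      π.closers i (fun j _ h => by rintro rfl; exact lt_irrefl _ h)
    rw [card_openers_lt] at ho
    rw [card_closers_gt] at hcl
    beta_reduce at ho hcl
    have hwi : (π.w i : ℕ) < k := (π.w i).isLt
    omega
  have := Finset.sum_congr rfl (fun i (_ : i ∈ (univ : Finset (Fin n))) => hper i)
  simp only [Finset.sum_add_distrib] at this
  simp only [SetPartition.lob, SetPartition.rcb, SetPartition.los, SetPartition.rcs]
  rw [Finset.sum_const, Finset.card_univ, Fintype.card_fin, smul_eq_mul] at this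
  omega

end AuxMak

/-- For all integers `n ≥ k ≥ 1` and every `π ∈ P(n,k)`,
`mak'(π) = lmak(π)`, i.e. `lob(π) + rcb(π) = n(k-1) - (los(π) + rcs(π))`. -/


theorem mak'_eq_lmak (n k : ℕ) (hk : 1 ≤ k) (hkn : k ≤ n) (π : SetPartition n k) :
    ((π.lob : ℤ) + π.rcb = (n : ℤ) * ((k : ℤ) - 1) - ((π.los : ℤ) + π.rcs)) ∧
    (π.mak' : ℤ) = π.lmak := by
  have key := key_sum π hk
  have h1 : (π.lob : ℤ) + π.rcb = (n : ℤ) * ((k : ℤ) - 1) - ((π.los : ℤ) + π.rcs) := by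
    have hz := congrArg (Nat.cast : ℕ → ℤ) key
    push_cast [Nat.cast_sub hk] at hz
    linarith
  refine ⟨h1, ?_⟩
  simp only [SetPartition.mak', SetPartition.lmak]
  push_cast
  linarith
end

section
/- For all integers n ≥ k ≥ 1 and every π ∈ P(n,k): mak(π) = Σ_{i ∈ F_s(π) ∪ P(π)} (l_i(π) − γ_i(π)) + Σ_{i=1}^{n} #{a ∈ F(π) : a < i}. -/
open Finset Polynomial

namespace SetPartition

variable {n k : ℕ}

/-- Block `c` has started before stage `m`. -/
def Started (π : SetPartition n k) (m : ℕ) (c : Fin k) : Prop :=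
  ∃ j : Fin n, (j : ℕ) < m ∧ π.w j = c

/-- Block `c` is entirely contained in the first `m` elements. -/
def CompleteAt (π : SetPartition n k) (m : ℕ) (c : Fin k) : Prop :=
  ∀ j : Fin n, π.w j = c → (j : ℕ) < m

instance (π : SetPartition n k) (m : ℕ) : DecidablePred (π.Started m) := fun c =>
  inferInstanceAs (Decidable (∃ j : Fin n, (j : ℕ) < m ∧ π.w j = c))

instance (π : SetPartition n k) (m : ℕ) : DecidablePred (π.CompleteAt m) := fun c =>
  inferInstanceAs (Decidable (∀ j : Fin n, π.w j = c → (j : ℕ) < m))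

lemma CompleteAt.started {π : SetPartition n k} {m : ℕ} {c : Fin k}
    (h : π.CompleteAt m c) : π.Started m c := by
  obtain ⟨j, hj⟩ := π.surj c
  exact ⟨j, h j hj, hj⟩

lemma incompleteAt_iff (π : SetPartition n k) (m : ℕ) (c : Fin k) :
    π.IncompleteAt m c ↔ π.Started m c ∧ ¬ π.CompleteAt m c := by
  unfold IncompleteAt Started CompleteAt
  push_neg
  constructor
  · rintro ⟨h1, j, h2, h3⟩
    exact ⟨h1, j, h3, h2⟩
  · rintro ⟨h1, j, h2, h3⟩
    exact ⟨h1, j, h3, h2⟩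

lemma started_of_lt {π : SetPartition n k} {m : ℕ} {c c' : Fin k} (h : c < c')
    (h' : π.Started m c') : π.Started m c := by
  obtain ⟨j, hj, hw⟩ := h'
  obtain ⟨j', hj', hw'⟩ := π.rgf j c (by rw [hw]; exact h)
  exact ⟨j', lt_trans (by exact_mod_cast hj') hj, hw'⟩

lemma exists_min_opener (π : SetPartition n k) (c : Fin k) :
    ∃ j : Fin n, j ∈ π.openers ∧ π.w j = c ∧ ∀ j', π.w j' = c → j ≤ j' := by
  obtain ⟨j0, hj0⟩ := π.surj c
  have hne : (univ.filter fun j => π.w j = c).Nonempty := ⟨j0, by simp [hj0]⟩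
  refine ⟨(univ.filter fun j => π.w j = c).min' hne, ?_, ?_, ?_⟩
  · have hm : π.w ((univ.filter fun j => π.w j = c).min' hne) = c := by
      have := (univ.filter fun j => π.w j = c).min'_mem hne
      simpa using this
    simp only [openers, mem_filter, mem_univ, true_and]
    intro j hj hwj
    have : (univ.filter fun j => π.w j = c).min' hne ≤ j :=
      Finset.min'_le _ _ (by simp [hwj, hm])
    exact absurd hj (not_lt.2 this)
  · have := (univ.filter fun j => π.w j = c).min'_mem hne
    simpa using this
  · intro j' hj'
    exact Finset.min'_le _ _ (by simp [hj'])

lemma exists_max_closer (π : SetPartition n k) (c : Fin k) :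
    ∃ j : Fin n, j ∈ π.closers ∧ π.w j = c ∧ ∀ j', π.w j' = c → j' ≤ j := by
  obtain ⟨j0, hj0⟩ := π.surj c
  have hne : (univ.filter fun j => π.w j = c).Nonempty := ⟨j0, by simp [hj0]⟩
  refine ⟨(univ.filter fun j => π.w j = c).max' hne, ?_, ?_, ?_⟩
  · have hm : π.w ((univ.filter fun j => π.w j = c).max' hne) = c := by
      have := (univ.filter fun j => π.w j = c).max'_mem hne
      simpa using this
    simp only [closers, mem_filter, mem_univ, true_and]
    intro j hj hwj
    have : j ≤ (univ.filter fun j => π.w j = c).max' hne :=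
      Finset.le_max' _ _ (by simp [hwj, hm])
    exact absurd hj (not_lt.2 this)
  · have := (univ.filter fun j => π.w j = c).max'_mem hne
    simpa using this
  · intro j' hj'
    exact Finset.le_max' _ _ (by simp [hj'])

lemma openers_inj {π : SetPartition n k} {a b : Fin n} (ha : a ∈ π.openers)
    (hb : b ∈ π.openers) (h : π.w a = π.w b) : a = b := by
  simp only [openers, mem_filter, mem_univ, true_and] at ha hb
  rcases lt_trichotomy a b with h' | h' | h'
  · exact absurd h (hb a h')
  · exact h'
  · exact absurd h.symm (ha b h')

lemma closers_inj {π : SetPartition n k} {a b : Fin n} (ha : a ∈ π.closers)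
    (hb : b ∈ π.closers) (h : π.w a = π.w b) : a = b := by
  simp only [closers, mem_filter, mem_univ, true_and] at ha hb
  rcases lt_trichotomy a b with h' | h' | h'
  · exact absurd h.symm (ha b h')
  · exact h'
  · exact absurd h (hb a h')

lemma ros_card_eq (π : SetPartition n k) (i : Fin n) :
    (π.openers.filter fun j => j < i ∧ π.w i < π.w j).card
      = (univ.filter fun c => π.Started (i : ℕ) c ∧ π.w i < c).card := by
  apply Finset.card_bij (fun j _ => π.w j)
  · intro a ha
    simp only [mem_filter, mem_univ, true_and] at ha ⊢
    exact ⟨⟨a, by exact_mod_cast ha.2.1, rfl⟩, ha.2.2⟩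
  · intro a ha b hb h
    simp only [mem_filter] at ha hb
    exact openers_inj ha.1 hb.1 h
  · intro c hc
    simp only [mem_filter, mem_univ, true_and] at hc
    obtain ⟨⟨j1, hj1, hwj1⟩, hc2⟩ := hc
    obtain ⟨j, hjo, hjw, hjmin⟩ := π.exists_min_opener c
    refine ⟨j, ?_, hjw⟩
    simp only [mem_filter]
    refine ⟨hjo, ?_, by rw [hjw]; exact hc2⟩
    have : j ≤ j1 := hjmin j1 hwj1
    exact lt_of_le_of_lt this (by exact_mod_cast hj1)

lemma lcs_card_eq (π : SetPartition n k) (i : Fin n) :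
    (π.closers.filter fun j => j < i ∧ π.w j < π.w i).card
      = (univ.filter fun c => π.CompleteAt (i : ℕ) c ∧ c < π.w i).card := by
  apply Finset.card_bij (fun j _ => π.w j)
  · intro a ha
    simp only [closers, mem_filter, mem_univ, true_and] at ha
    simp only [mem_filter, mem_univ, true_and]
    refine ⟨?_, ha.2.2⟩
    intro j hj
    have hja : j ≤ a := by
      by_contra hlt
      exact ha.1 j (not_le.1 hlt) hj
    calc (j : ℕ) ≤ (a : ℕ) := by exact_mod_cast hja
      _ < (i : ℕ) := by exact_mod_cast ha.2.1
  · intro a ha b hb h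
    simp only [mem_filter] at ha hb
    exact closers_inj ha.1 hb.1 h
  · intro c hc
    simp only [mem_filter, mem_univ, true_and] at hc
    obtain ⟨j, hjc, hjw, hjmax⟩ := π.exists_max_closer c
    refine ⟨j, ?_, hjw⟩
    simp only [mem_filter]
    refine ⟨hjc, ?_, by rw [hjw]; exact hc.2⟩
    have := hc.1 j hjw
    exact_mod_cast this

lemma closers_lt_card_eq (π : SetPartition n k) (i : Fin n) :
    (π.closers.filter fun a => a < i).card
      = (univ.filter fun c => π.CompleteAt (i : ℕ) c).card := by
  apply Finset.card_bij (fun j _ => π.w j)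
  · intro a ha
    simp only [closers, mem_filter, mem_univ, true_and] at ha
    simp only [mem_filter, mem_univ, true_and]
    intro j hj
    have hja : j ≤ a := by
      by_contra hlt
      exact ha.1 j (not_le.1 hlt) hj
    calc (j : ℕ) ≤ (a : ℕ) := by exact_mod_cast hja
      _ < (i : ℕ) := by exact_mod_cast ha.2
  · intro a ha b hb h
    simp only [mem_filter] at ha hb
    exact closers_inj ha.1 hb.1 h
  · intro c hc
    simp only [mem_filter, mem_univ, true_and] at hc
    obtain ⟨j, hjc, hjw, hjmax⟩ := π.exists_max_closer c
    refine ⟨j, ?_, hjw⟩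
    simp only [mem_filter]
    exact ⟨hjc, by exact_mod_cast hc j hjw⟩

end SetPartition

namespace SetPartition

variable {n k : ℕ}

lemma not_complete_self (π : SetPartition n k) (i : Fin n) :
    ¬ π.CompleteAt (i : ℕ) (π.w i) := fun h => lt_irrefl _ (h i rfl)

lemma one_eq_sum (π : SetPartition n k) (i : Fin n) :
    (1 : ℕ) = ∑ c : Fin k, if c = π.w i then 1 else 0 := by
  rw [← Finset.card_filter]
  rw [Finset.filter_eq']
  simp

lemma key_opener (π : SetPartition n k) (i : Fin n) (hi : i ∈ π.openers) :
    (π.openers.filter fun j => j < i ∧ π.w i < π.w j).card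
    + (π.closers.filter fun j => j < i ∧ π.w j < π.w i).card
    = (π.closers.filter fun a => a < i).card := by
  simp only [openers, mem_filter, mem_univ, true_and] at hi
  have hlt : ∀ c, π.Started (i : ℕ) c → c < π.w i := by
    intro c hc
    rcases lt_trichotomy c (π.w i) with h | h | h
    · exact h
    · obtain ⟨j, hj, hw⟩ := hc
      exact absurd (h ▸ hw) (hi j (by exact_mod_cast hj))
    · obtain ⟨j, hj, hw⟩ := started_of_lt h hc
      exact absurd hw (hi j (by exact_mod_cast hj))
  rw [ros_card_eq, lcs_card_eq, closers_lt_card_eq]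
  have h1 : (univ.filter fun c => π.Started (i : ℕ) c ∧ π.w i < c) = ∅ := by
    ext c
    simp only [mem_filter, mem_univ, true_and, Finset.notMem_empty, iff_false, not_and]
    exact fun hs => asymm (hlt c hs)
  have h2 : (univ.filter fun c => π.CompleteAt (i : ℕ) c ∧ c < π.w i)
      = univ.filter fun c => π.CompleteAt (i : ℕ) c := by
    ext c
    simp only [mem_filter, mem_univ, true_and, and_iff_left_iff_imp]
    exact fun hc => hlt c hc.started
  rw [h1, h2]
  simp

lemma key_nonopener (π : SetPartition n k) (i : Fin n) (hi : i ∉ π.openers) :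
    (π.openers.filter fun j => j < i ∧ π.w i < π.w j).card
    + (π.closers.filter fun j => j < i ∧ π.w j < π.w i).card
    + π.gammaTrace i
    = π.lTrace i + (π.closers.filter fun a => a < i).card := by
  have hstart : π.Started (i : ℕ) (π.w i) := by
    simp only [openers, mem_filter, mem_univ, true_and, not_forall] at hi
    obtain ⟨j, hj, hw⟩ := hi
    exact ⟨j, by exact_mod_cast hj, not_not.1 hw⟩
  rw [ros_card_eq, lcs_card_eq, closers_lt_card_eq]
  unfold gammaTrace lTrace
  have hpt : ∀ c ∈ (univ : Finset (Fin k)),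
      ((if π.Started (i : ℕ) c ∧ π.w i < c then 1 else 0)
        + (if π.CompleteAt (i : ℕ) c ∧ c < π.w i then 1 else 0))
      + ((if c = π.w i then 1 else 0)
        + (if π.IncompleteAt ((i : ℕ) + 1) c ∧ c < π.w i then 1 else 0))
      = (if π.IncompleteAt (i : ℕ) c then 1 else 0)
        + (if π.CompleteAt (i : ℕ) c then 1 else 0) := by
    intro c _
    rcases lt_trichotomy c (π.w i) with h | h | h
    · have hSc : π.Started (i : ℕ) c := started_of_lt h hstart
      have hS1 : π.Started ((i : ℕ) + 1) c := by
        obtain ⟨j, hj, hw⟩ := hSc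
        exact ⟨j, Nat.lt_succ_of_lt hj, hw⟩
      have hCiff : π.CompleteAt ((i : ℕ) + 1) c ↔ π.CompleteAt (i : ℕ) c := by
        constructor
        · intro hc j hj
          rcases Nat.lt_succ_iff_lt_or_eq.1 (hc j hj) with h' | h'
          · exact h'
          · exfalso
            have hji : j = i := Fin.ext h'
            rw [hji] at hj
            exact absurd hj.symm (ne_of_lt h)
        · intro hc j hj
          exact Nat.lt_succ_of_lt (hc j hj)
      by_cases hC : π.CompleteAt (i : ℕ) c
      · simp [incompleteAt_iff, hC, h, asymm h, ne_of_lt h, hCiff, hSc, hS1]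
      · simp [incompleteAt_iff, hC, h, asymm h, ne_of_lt h, hCiff, hSc, hS1]
    · subst h
      simp [incompleteAt_iff, hstart, π.not_complete_self i]
    · have hne : c ≠ π.w i := (ne_of_lt h).symm
      by_cases hC : π.CompleteAt (i : ℕ) c
      · simp [incompleteAt_iff, hC, asymm h, hne, hC.started, h, not_lt.2 h.le]
      · by_cases hS : π.Started (i : ℕ) c
        · simp [incompleteAt_iff, hC, hS, asymm h, hne, h, not_lt.2 h.le]
        · simp [incompleteAt_iff, hC, hS, asymm h, hne, not_lt.2 h.le]
  have := Finset.sum_congr rfl hpt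
  simp only [Finset.sum_add_distrib] at this
  simp only [Finset.card_filter]
  have h1 := π.one_eq_sum i
  omega

lemma union_eq (π : SetPartition n k) :
    π.closersOnly ∪ π.transients = univ \ π.openers := by
  ext i
  simp only [closersOnly, transients, mem_union, mem_sdiff, mem_univ, true_and, mem_union]
  tauto

end SetPartition

/-- For all integers `n ≥ k ≥ 1` and every `π ∈ P(n,k)`:
`mak(π) = Σ_{i ∈ F_s(π) ∪ P(π)} (l_i(π) - γ_i(π)) + Σ_{i=1}^n #{a ∈ F(π) : a < i}`. -/
theorem mak_eq_trace_formula (n k : ℕ) (hk : 1 ≤ k) (hkn : k ≤ n) (π : SetPartition n k) :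
    (π.mak : ℤ) =
      (∑ i ∈ π.closersOnly ∪ π.transients, ((π.lTrace i : ℤ) - (π.gammaTrace i : ℤ))) +
      ∑ i : Fin n, ((π.closers.filter fun a => a < i).card : ℤ) := by
  have hO : ∀ i ∈ π.openers,
      (((π.openers.filter fun j => j < i ∧ π.w i < π.w j).card : ℤ)
        + ((π.closers.filter fun j => j < i ∧ π.w j < π.w i).card : ℤ))
      = ((π.closers.filter fun a => a < i).card : ℤ) := by
    intro i hi
    exact_mod_cast π.key_opener i hi
  have hOc : ∀ i ∈ (univ : Finset (Fin n)) \ π.openers,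
      (((π.openers.filter fun j => j < i ∧ π.w i < π.w j).card : ℤ)
        + ((π.closers.filter fun j => j < i ∧ π.w j < π.w i).card : ℤ))
      = ((π.lTrace i : ℤ) - (π.gammaTrace i : ℤ))
        + ((π.closers.filter fun a => a < i).card : ℤ) := by
    intro i hi
    have hi' : i ∉ π.openers := (mem_sdiff.1 hi).2
    have := π.key_nonopener i hi'
    have h2 : (((π.openers.filter fun j => j < i ∧ π.w i < π.w j).card : ℤ)
        + ((π.closers.filter fun j => j < i ∧ π.w j < π.w i).card : ℤ))
        + (π.gammaTrace i : ℤ)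
        = (π.lTrace i : ℤ) + ((π.closers.filter fun a => a < i).card : ℤ) := by
      exact_mod_cast this
    linarith
  rw [π.union_eq]
  have hm : (π.mak : ℤ) = ∑ i : Fin n,
      (((π.openers.filter fun j => j < i ∧ π.w i < π.w j).card : ℤ)
        + ((π.closers.filter fun j => j < i ∧ π.w j < π.w i).card : ℤ)) := by
    unfold SetPartition.mak SetPartition.ros SetPartition.lcs
    push_cast
    rw [Finset.sum_add_distrib]
  rw [hm]
  rw [← Finset.sum_sdiff (Finset.subset_univ π.openers)]
  rw [Finset.sum_congr rfl hOc, Finset.sum_congr rfl hO]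
  rw [Finset.sum_add_distrib]
  rw [← Finset.sum_sdiff (Finset.subset_univ π.openers) (f := fun i => ((π.closers.filter fun a => a < i).card : ℤ))]
  ring
end

section
/- For all integers n ≥ k ≥ 1 and every π ∈ P(n,k), there exists a bijection ψ from O_s(π) onto F_s(π) such that l_{ψ(a)}(π) = l_a(π) + 1 for every a ∈ O_s(π). -/
open Finset Polynomial

namespace SetPartition

variable {n k : ℕ}

/-- Number of incomplete blocks at stage `m`, for arbitrary `m : ℕ`. -/
def Lfun (π : SetPartition n k) (m : ℕ) : ℕ :=
  (univ.filter fun c => π.IncompleteAt m c).card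

lemma lTrace_eq_Lfun (π : SetPartition n k) (i : Fin n) : π.lTrace i = π.Lfun i := rfl

lemma Lfun_zero (π : SetPartition n k) : π.Lfun 0 = 0 := by
  simp [Lfun, IncompleteAt]

lemma Lfun_n (π : SetPartition n k) : π.Lfun n = 0 := by
  have h : ∀ c : Fin k, ¬ π.IncompleteAt n c := by
    rintro c ⟨-, j, hj, -⟩
    exact absurd j.isLt (by omega)
  simp [Lfun, Finset.filter_eq_empty_iff.2 fun c _ => h c]

lemma incompleteAt_self_iff (π : SetPartition n k) (i : Fin n) :
    π.IncompleteAt (i : ℕ) (π.w i) ↔ ∃ j, j < i ∧ π.w j = π.w i := by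
  constructor
  · rintro ⟨⟨j, hj, hw⟩, -⟩
    exact ⟨j, hj, hw⟩
  · rintro ⟨j, hj, hw⟩
    exact ⟨⟨j, hj, hw⟩, ⟨i, le_refl _, rfl⟩⟩

lemma incompleteAt_succ_self_iff (π : SetPartition n k) (i : Fin n) :
    π.IncompleteAt ((i : ℕ) + 1) (π.w i) ↔ ∃ j, i < j ∧ π.w j = π.w i := by
  constructor
  · rintro ⟨-, j, hj, hw⟩
    exact ⟨j, by omega, hw⟩
  · rintro ⟨j, hj, hw⟩
    exact ⟨⟨i, by omega, rfl⟩, ⟨j, by exact hj, hw⟩⟩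

lemma incompleteAt_succ_ne (π : SetPartition n k) (i : Fin n) (c : Fin k)
    (hc : c ≠ π.w i) :
    π.IncompleteAt ((i : ℕ) + 1) c ↔ π.IncompleteAt (i : ℕ) c := by
  constructor
  · rintro ⟨⟨j, hj, hw⟩, j2, hj2, hw2⟩
    refine ⟨⟨j, ?_, hw⟩, ⟨j2, by omega, hw2⟩⟩
    rcases Nat.lt_or_ge (j : ℕ) (i : ℕ) with h | h
    · exact h
    · exfalso
      have : j = i := Fin.ext (by omega)
      subst this
      exact hc hw.symm
  · rintro ⟨⟨j, hj, hw⟩, j2, hj2, hw2⟩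
    refine ⟨⟨j, by omega, hw⟩, ⟨j2, ?_, hw2⟩⟩
    rcases Nat.lt_or_ge (i : ℕ) (j2 : ℕ) with h | h
    · omega
    · exfalso
      have : j2 = i := Fin.ext (by omega)
      subst this
      exact hc hw2.symm

lemma Lfun_step (π : SetPartition n k) (i : Fin n) :
    (π.Lfun ((i : ℕ) + 1) : ℤ) - (π.Lfun (i : ℕ) : ℤ) =
      (if ∃ j, i < j ∧ π.w j = π.w i then 1 else 0)
        - (if ∃ j, j < i ∧ π.w j = π.w i then 1 else 0) := by
  classical
  have key : ∀ m : ℕ, (π.Lfun m : ℤ) =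
      (((univ.filter fun c => π.IncompleteAt m c).erase (π.w i)).card : ℤ)
        + (if π.IncompleteAt m (π.w i) then 1 else 0) := by
    intro m
    by_cases h : π.IncompleteAt m (π.w i)
    · have hm : π.w i ∈ univ.filter fun c => π.IncompleteAt m c :=
        mem_filter.2 ⟨mem_univ _, h⟩
      have hpos : 0 < (univ.filter fun c => π.IncompleteAt m c).card :=
        card_pos.2 ⟨_, hm⟩
      rw [Lfun, if_pos h, card_erase_of_mem hm]
      omega
    · rw [Lfun, if_neg h, erase_eq_of_notMem (by simp [h]), add_zero]
  have herase : ((univ.filter fun c => π.IncompleteAt ((i : ℕ) + 1) c).erase (π.w i))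
      = ((univ.filter fun c => π.IncompleteAt (i : ℕ) c).erase (π.w i)) := by
    ext c
    simp only [mem_erase, mem_filter, mem_univ, true_and]
    exact and_congr_right fun hc => π.incompleteAt_succ_ne i c hc
  rw [key ((i : ℕ) + 1), key (i : ℕ), herase]
  have h1 : (if π.IncompleteAt ((i : ℕ) + 1) (π.w i) then (1 : ℤ) else 0)
      = (if ∃ j, i < j ∧ π.w j = π.w i then 1 else 0) := by
    simp only [π.incompleteAt_succ_self_iff i]
  have h2 : (if π.IncompleteAt (i : ℕ) (π.w i) then (1 : ℤ) else 0)
      = (if ∃ j, j < i ∧ π.w j = π.w i then 1 else 0) := by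
    simp only [π.incompleteAt_self_iff i]
  rw [h1, h2]
  ring

lemma not_mem_openers_iff (π : SetPartition n k) (i : Fin n) :
    i ∉ π.openers ↔ ∃ j, j < i ∧ π.w j = π.w i := by
  simp only [openers, mem_filter, mem_univ, true_and]
  push_neg
  simp

lemma not_mem_closers_iff (π : SetPartition n k) (i : Fin n) :
    i ∉ π.closers ↔ ∃ j, i < j ∧ π.w j = π.w i := by
  simp only [closers, mem_filter, mem_univ, true_and]
  push_neg
  simp

lemma card_level (π : SetPartition n k) (h : ℕ) :
    (π.openersOnly.filter fun a => π.lTrace a = h).card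
      = (π.closersOnly.filter fun b => π.lTrace b = h + 1).card := by
  classical
  set g : ℕ → ℤ := fun m => if h + 1 ≤ π.Lfun m then 1 else 0 with hg
  have tele : ∑ m ∈ Finset.range n, (g (m + 1) - g m) = g n - g 0 :=
    Finset.sum_range_sub g n
  have h0 : g 0 = 0 := by simp [hg, π.Lfun_zero]
  have hn : g n = 0 := by simp [hg, π.Lfun_n]
  have hpoint : ∀ i : Fin n, g ((i : ℕ) + 1) - g (i : ℕ)
      = (if i ∈ π.openersOnly.filter (fun a => π.lTrace a = h) then (1 : ℤ) else 0)
        - (if i ∈ π.closersOnly.filter (fun b => π.lTrace b = h + 1) then (1 : ℤ) else 0) := by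
    intro i
    have hstep := π.Lfun_step i
    have hO := π.not_mem_openers_iff i
    have hC := π.not_mem_closers_iff i
    simp only [mem_filter, openersOnly, closersOnly, mem_sdiff, hg]
    simp only [lTrace_eq_Lfun]
    by_cases hP : ∃ j, j < i ∧ π.w j = π.w i
    · have hiO : i ∉ π.openers := hO.2 hP
      by_cases hQ : ∃ j, i < j ∧ π.w j = π.w i
      · have hiC : i ∉ π.closers := hC.2 hQ
        rw [if_pos hQ, if_pos hP] at hstep
        have e1 : ((i ∈ π.openers ∧ i ∉ π.closers) ∧ π.Lfun ↑i = h) ↔ False := by tauto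
        have e2 : ((i ∈ π.closers ∧ i ∉ π.openers) ∧ π.Lfun ↑i = h + 1) ↔ False := by tauto
        simp only [e1, e2, if_false]
        split_ifs <;> omega
      · have hiC : i ∈ π.closers := by
          by_contra hcon
          exact hQ (hC.1 hcon)
        rw [if_neg hQ, if_pos hP] at hstep
        have e1 : ((i ∈ π.openers ∧ i ∉ π.closers) ∧ π.Lfun ↑i = h) ↔ False := by tauto
        have e2 : ((i ∈ π.closers ∧ i ∉ π.openers) ∧ π.Lfun ↑i = h + 1) ↔ π.Lfun ↑i = h + 1 := by
          tauto
        simp only [e1, e2, if_false]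
        split_ifs <;> omega
    · have hiO : i ∈ π.openers := by
        by_contra hcon
        exact hP (hO.1 hcon)
      by_cases hQ : ∃ j, i < j ∧ π.w j = π.w i
      · have hiC : i ∉ π.closers := hC.2 hQ
        rw [if_pos hQ, if_neg hP] at hstep
        have e1 : ((i ∈ π.openers ∧ i ∉ π.closers) ∧ π.Lfun ↑i = h) ↔ π.Lfun ↑i = h := by tauto
        have e2 : ((i ∈ π.closers ∧ i ∉ π.openers) ∧ π.Lfun ↑i = h + 1) ↔ False := by tauto
        simp only [e1, e2, if_false]
        split_ifs <;> omega
      · have hiC : i ∈ π.closers := by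
          by_contra hcon
          exact hQ (hC.1 hcon)
        rw [if_neg hQ, if_neg hP] at hstep
        have e1 : ((i ∈ π.openers ∧ i ∉ π.closers) ∧ π.Lfun ↑i = h) ↔ False := by tauto
        have e2 : ((i ∈ π.closers ∧ i ∉ π.openers) ∧ π.Lfun ↑i = h + 1) ↔ False := by tauto
        simp only [e1, e2, if_false]
        split_ifs <;> omega
  have total : ∑ i : Fin n, (g ((i : ℕ) + 1) - g (i : ℕ)) = 0 := by
    rw [Fin.sum_univ_eq_sum_range (fun m => g (m + 1) - g m) n, tele, h0, hn]
    ring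
  rw [Finset.sum_congr rfl (fun i _ => hpoint i)] at total
  rw [Finset.sum_sub_distrib] at total
  rw [Finset.sum_ite_mem, Finset.sum_ite_mem, Finset.univ_inter, Finset.univ_inter] at total
  simp only [Finset.sum_const, nsmul_eq_mul, mul_one] at total
  omega

lemma one_le_lTrace_of_closersOnly (π : SetPartition n k) (b : Fin n)
    (hb : b ∈ π.closersOnly) : 1 ≤ π.lTrace b := by
  obtain ⟨hbc, hbo⟩ := mem_sdiff.1 hb
  have hP : ∃ j, j < b ∧ π.w j = π.w b := (π.not_mem_openers_iff b).1 hbo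
  have hQ : ¬ ∃ j, b < j ∧ π.w j = π.w b := by
    intro hq
    exact (π.not_mem_closers_iff b).2 hq hbc
  have hstep := π.Lfun_step b
  rw [if_neg hQ, if_pos hP] at hstep
  rw [lTrace_eq_Lfun]
  omega

end SetPartition

/-- For all integers `n ≥ k ≥ 1` and every `π ∈ P(n,k)`, there is a
bijection `ψ` from `O_s(π)` onto `F_s(π)` such that `l_{ψ(a)}(π) = l_a(π) + 1` for every
`a ∈ O_s(π)`. -/
theorem exists_bijOn_openersOnly_closersOnly (n k : ℕ) (hk : 1 ≤ k) (hkn : k ≤ n)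
    (π : SetPartition n k) :
    ∃ ψ : Fin n → Fin n,
      Set.BijOn ψ ↑π.openersOnly ↑π.closersOnly ∧
      ∀ a ∈ π.openersOnly, π.lTrace (ψ a) = π.lTrace a + 1 := by
  classical
  set A : ℕ → Finset (Fin n) := fun h => π.openersOnly.filter fun a => π.lTrace a = h with hA
  set B : ℕ → Finset (Fin n) := fun h => π.closersOnly.filter fun b => π.lTrace b = h + 1 with hB
  have hbij : ∀ h : ℕ, ∃ f : Fin n → Fin n, Set.BijOn f ↑(A h) ↑(B h) := by
    intro h
    have hc : (A h).card = (B h).card := π.card_level h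
    set e := Finset.equivOfCardEq hc with he
    refine ⟨fun x => if hx : x ∈ A h then (e ⟨x, hx⟩ : Fin n) else x, ?_, ?_, ?_⟩
    · intro x hx
      rw [Finset.mem_coe] at hx
      simp only [dif_pos hx]
      exact Finset.mem_coe.2 (e ⟨x, hx⟩).2
    · intro x hx y hy hxy
      rw [Finset.mem_coe] at hx hy
      simp only [dif_pos hx, dif_pos hy] at hxy
      have := e.injective (Subtype.ext hxy)
      exact congrArg Subtype.val this
    · intro b hb
      rw [Finset.mem_coe] at hb
      have hxA : ((e.symm ⟨b, hb⟩ : {x // x ∈ A h}) : Fin n) ∈ A h := (e.symm ⟨b, hb⟩).2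
      refine ⟨((e.symm ⟨b, hb⟩ : {x // x ∈ A h}) : Fin n), Finset.mem_coe.2 hxA, ?_⟩
      simp only [dif_pos hxA]
      have heq : (⟨((e.symm ⟨b, hb⟩ : {x // x ∈ A h}) : Fin n), hxA⟩ : {x // x ∈ A h})
          = e.symm ⟨b, hb⟩ := Subtype.ext rfl
      rw [heq, e.apply_symm_apply]
  choose f hf using hbij
  set psi : Fin n -> Fin n := fun a => if a ∈ π.openersOnly then f (π.lTrace a) a else a
    with hpsi
  have hAmem : ∀ a ∈ π.openersOnly, a ∈ A (π.lTrace a) := fun a ha =>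
    mem_filter.2 ⟨ha, rfl⟩
  have hpsiB : ∀ a ∈ π.openersOnly, psi a ∈ B (π.lTrace a) := by
    intro a ha
    rw [hpsi]
    simp only [if_pos ha]
    exact Finset.mem_coe.1 ((hf (π.lTrace a)).mapsTo (Finset.mem_coe.2 (hAmem a ha)))
  have hpsiTrace : ∀ a ∈ π.openersOnly, π.lTrace (psi a) = π.lTrace a + 1 := by
    intro a ha
    exact (mem_filter.1 (hpsiB a ha)).2
  refine ⟨psi, ⟨?_, ?_, ?_⟩, hpsiTrace⟩
  · intro a ha
    rw [Finset.mem_coe] at ha ⊢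
    exact (mem_filter.1 (hpsiB a ha)).1
  · intro a ha a' ha' heq
    rw [Finset.mem_coe] at ha ha'
    have hl : π.lTrace a = π.lTrace a' := by
      have h1 := hpsiTrace a ha
      have h2 := hpsiTrace a' ha'
      rw [heq] at h1
      omega
    rw [hpsi] at heq
    simp only [if_pos ha, if_pos ha', hl] at heq
    exact (hf (π.lTrace a')).injOn (Finset.mem_coe.2 (by rw [← hl]; exact hAmem a ha))
      (Finset.mem_coe.2 (hAmem a' ha')) (by rw [← hl] at heq ⊢; exact heq)
  · intro b hb
    rw [Finset.mem_coe] at hb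
    have h1 : 1 ≤ π.lTrace b := π.one_le_lTrace_of_closersOnly b hb
    obtain ⟨h, hh⟩ : ∃ h, π.lTrace b = h + 1 := ⟨π.lTrace b - 1, by omega⟩
    have hbB : b ∈ B h := mem_filter.2 ⟨hb, hh⟩
    obtain ⟨a, haA, hab⟩ := (hf h).surjOn (Finset.mem_coe.2 hbB)
    rw [Finset.mem_coe] at haA
    have haO : a ∈ π.openersOnly := (mem_filter.1 haA).1
    have haT : π.lTrace a = h := (mem_filter.1 haA).2
    refine ⟨a, Finset.mem_coe.2 haO, ?_⟩
    rw [hpsi]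
    simp only [if_pos haO, haT]
    exact hab
end

section
/- For all integers n ≥ k ≥ 1 and every π ∈ P(n,k): mak'(π) = n(k−1) − los(π) − linv(F(π),π). -/
open Finset Polynomial

namespace SetPartition

variable {n k : ℕ} (π : SetPartition n k)

lemma w_inj_on_openers : ∀ j₁ ∈ π.openers, ∀ j₂ ∈ π.openers, π.w j₁ = π.w j₂ → j₁ = j₂ := by
  intro j₁ h₁ j₂ h₂ hw
  simp only [openers, mem_filter, mem_univ, true_and] at h₁ h₂
  rcases lt_trichotomy j₁ j₂ with h | h | h
  · exact absurd hw (h₂ j₁ h)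
  · exact h
  · exact absurd hw.symm (h₁ j₂ h)

lemma w_inj_on_closers : ∀ j₁ ∈ π.closers, ∀ j₂ ∈ π.closers, π.w j₁ = π.w j₂ → j₁ = j₂ := by
  intro j₁ h₁ j₂ h₂ hw
  simp only [closers, mem_filter, mem_univ, true_and] at h₁ h₂
  rcases lt_trichotomy j₁ j₂ with h | h | h
  · exact absurd hw.symm (h₁ j₂ h)
  · exact h
  · exact absurd hw (h₂ j₁ h)

lemma exists_opener (c : Fin k) : ∃ j ∈ π.openers, π.w j = c := by
  obtain ⟨j0, hj0⟩ := π.surj c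
  have hne : (univ.filter fun i => π.w i = c).Nonempty := ⟨j0, by simp [hj0]⟩
  refine ⟨(univ.filter fun i => π.w i = c).min' hne, ?_, ?_⟩
  · simp only [openers, mem_filter, mem_univ, true_and]
    intro j hj hwj
    have hc : π.w ((univ.filter fun i => π.w i = c).min' hne) = c :=
      (mem_filter.1 ((univ.filter fun i => π.w i = c).min'_mem hne)).2
    have hjm : j ∈ univ.filter fun i => π.w i = c :=
      mem_filter.2 ⟨mem_univ j, show π.w j = c from hwj.trans hc⟩
    have := Finset.min'_le (univ.filter fun i => π.w i = c) j hjm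
    exact absurd this (not_le.2 hj)
  · exact (mem_filter.1 ((univ.filter fun i => π.w i = c).min'_mem hne)).2

lemma exists_closer (c : Fin k) : ∃ j ∈ π.closers, π.w j = c := by
  obtain ⟨j0, hj0⟩ := π.surj c
  have hne : (univ.filter fun i => π.w i = c).Nonempty := ⟨j0, by simp [hj0]⟩
  refine ⟨(univ.filter fun i => π.w i = c).max' hne, ?_, ?_⟩
  · simp only [closers, mem_filter, mem_univ, true_and]
    intro j hj hwj
    have hc : π.w ((univ.filter fun i => π.w i = c).max' hne) = c :=
      (mem_filter.1 ((univ.filter fun i => π.w i = c).max'_mem hne)).2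
    have hjm : j ∈ univ.filter fun i => π.w i = c :=
      mem_filter.2 ⟨mem_univ j, show π.w j = c from hwj.trans hc⟩
    have := Finset.le_max' (univ.filter fun i => π.w i = c) j hjm
    exact absurd this (not_le.2 hj)
  · exact (mem_filter.1 ((univ.filter fun i => π.w i = c).max'_mem hne)).2

lemma card_openers_lt (i : Fin n) :
    (π.openers.filter fun j => π.w j < π.w i).card = (π.w i : ℕ) := by
  have : (π.openers.filter fun j => π.w j < π.w i).card = (Finset.Iio (π.w i)).card := by
    refine Finset.card_bij (fun j _ => π.w j) ?_ ?_ ?_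
    · intro a ha; exact mem_Iio.2 (mem_filter.1 ha).2
    · intro a₁ h₁ a₂ h₂ h
      exact π.w_inj_on_openers a₁ (mem_filter.1 h₁).1 a₂ (mem_filter.1 h₂).1 h
    · intro c hc
      obtain ⟨j, hj, hwj⟩ := π.exists_opener c
      exact ⟨j, mem_filter.2 ⟨hj, hwj ▸ mem_Iio.1 hc⟩, hwj⟩
  rw [this]; simp [Fin.card_Iio]

lemma card_closers_gt (i : Fin n) :
    (π.closers.filter fun j => π.w i < π.w j).card = k - 1 - (π.w i : ℕ) := by
  have : (π.closers.filter fun j => π.w i < π.w j).card = (Finset.Ioi (π.w i)).card := by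
    refine Finset.card_bij (fun j _ => π.w j) ?_ ?_ ?_
    · intro a ha; exact mem_Ioi.2 (mem_filter.1 ha).2
    · intro a₁ h₁ a₂ h₂ h
      exact π.w_inj_on_closers a₁ (mem_filter.1 h₁).1 a₂ (mem_filter.1 h₂).1 h
    · intro c hc
      obtain ⟨j, hj, hwj⟩ := π.exists_closer c
      exact ⟨j, mem_filter.2 ⟨hj, hwj ▸ mem_Ioi.1 hc⟩, hwj⟩
  rw [this]; simp [Fin.card_Ioi]

lemma split_card {s : Finset (Fin n)} (i : Fin n) (P : Fin n → Prop) [DecidablePred P]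
    (hP : ¬ P i) :
    (s.filter fun j => i < j ∧ P j).card + (s.filter fun j => j < i ∧ P j).card
      = (s.filter P).card := by
  rw [← Finset.card_union_of_disjoint]
  · congr 1
    ext j
    simp only [mem_union, mem_filter]
    constructor
    · rintro (⟨h, _, h2⟩ | ⟨h, _, h2⟩) <;> exact ⟨h, h2⟩
    · rintro ⟨hs, hp⟩
      rcases lt_trichotomy i j with h | h | h
      · exact Or.inl ⟨hs, h, hp⟩
      · exact absurd hp (h ▸ hP)
      · exact Or.inr ⟨hs, h, hp⟩
  · rw [Finset.disjoint_left]
    intro a h1 h2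
    exact absurd (mem_filter.1 h2).2.1 (not_lt.2 (mem_filter.1 h1).2.1.le)

end SetPartition

/-- For all integers `n ≥ k ≥ 1` and every `π ∈ P(n,k)`:
`mak'(π) = n(k-1) - los(π) - linv(F(π),π)`. -/
theorem mak'_eq_los_linv (n k : ℕ) (hk : 1 ≤ k) (hkn : k ≤ n) (π : SetPartition n k) :
    (π.mak' : ℤ) =
      (n : ℤ) * ((k : ℤ) - 1) - (π.los : ℤ) - (π.linvSet π.closers : ℤ) := by
  have hA : π.lob + π.los = ∑ i : Fin n, (π.w i : ℕ) := by
    unfold SetPartition.lob SetPartition.los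
    rw [← Finset.sum_add_distrib]
    refine Finset.sum_congr rfl fun i _ => ?_
    rw [SetPartition.split_card (s := π.openers) i (fun j => π.w j < π.w i) (lt_irrefl _),
      π.card_openers_lt i]
  have hswap : π.linvSet π.closers
      = ∑ i : Fin n, (π.closers.filter fun j => j < i ∧ π.w i < π.w j).card := by
    unfold SetPartition.linvSet SetPartition.linv
    simp only [Finset.card_filter]
    exact Finset.sum_comm
  have hB : π.rcb + π.linvSet π.closers = ∑ i : Fin n, (k - 1 - (π.w i : ℕ)) := by
    unfold SetPartition.rcb
    rw [hswap, ← Finset.sum_add_distrib]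
    refine Finset.sum_congr rfl fun i _ => ?_
    rw [SetPartition.split_card (s := π.closers) i (fun j => π.w i < π.w j) (lt_irrefl _),
      π.card_closers_gt i]
  have h1 : (π.lob + π.los) + (π.rcb + π.linvSet π.closers)
      = ∑ i : Fin n, ((π.w i : ℕ) + (k - 1 - (π.w i : ℕ))) := by
    rw [hA, hB, Finset.sum_add_distrib]
  have h2 : ∀ i : Fin n, (π.w i : ℕ) + (k - 1 - (π.w i : ℕ)) = k - 1 := fun i => by
    have := (π.w i).isLt; omega
  rw [Finset.sum_congr rfl (fun i _ => h2 i), Finset.sum_const, Finset.card_univ,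
    Fintype.card_fin, smul_eq_mul] at h1
  have hcast : ((n * (k - 1) : ℕ) : ℤ) = (n : ℤ) * ((k : ℤ) - 1) := by
    push_cast [Nat.cast_sub hk]; ring
  unfold SetPartition.mak'
  rw [← hcast]
  omega
end

section
/- Let n ≥ 1, k ≥ 0 with k+1 ≤ n, and let O ⊆ [n] with 1 ∈ O and #O = k+1. Then the statistic los + linv(O(·),·) is constant on P(n,k+1;O); more precisely, for every π ∈ P(n,k+1;O): los(π) + linv(O,π) = Σ_{x ∈ O, x ≠ 1} (n − x + 1). -/
open Finset Polynomial

/-- Let `n ≥ 1`, `k ≥ 0` with `k+1 ≤ n`, and let `O ⊆ [n]` with `1 ∈ O`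
and `#O = k+1` (the element `x+1` of `[n]` is represented by `x : Fin n`, so `1 ∈ O`
reads `⟨0,_⟩ ∈ O` and `n - x + 1` reads `n - (x : ℕ)`). Then for every `π ∈ P(n,k+1)`
whose set of openers is `O`:
`los(π) + linv(O,π) = Σ_{x ∈ O, x ≠ 1} (n - x + 1)`. -/
theorem los_add_linv_openers_const (n k : ℕ) (hn : 1 ≤ n) (hkn : k + 1 ≤ n)
    (O : Finset (Fin n)) (hO1 : (⟨0, by omega⟩ : Fin n) ∈ O) (hOcard : O.card = k + 1)
    (π : SetPartition n (k + 1)) (hπ : π.openers = O) :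
    π.los + π.linvSet O = ∑ x ∈ O.erase ⟨0, by omega⟩, (n - (x : ℕ)) := by
  classical
  -- Step 1: los as a sum over openers
  have hlos : π.los = ∑ o ∈ O, (univ.filter fun i => o < i ∧ π.w o < π.w i).card := by
    unfold SetPartition.los
    rw [hπ]
    simp only [Finset.card_filter]
    rw [Finset.sum_comm]
  -- pointwise partition of {i : o < i}
  have hpt : ∀ o : Fin n,
      (univ.filter fun i => o < i ∧ π.w o < π.w i).card
      + (univ.filter fun i => o < i ∧ π.w i < π.w o).card
      + (univ.filter fun i => o < i ∧ π.w i = π.w o).card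
      = n - 1 - (o : ℕ) := by
    intro o
    have hIoi : (univ.filter fun i => o < i) = Finset.Ioi o := by ext i; simp
    have hc : (univ.filter fun i => o < i).card = n - 1 - (o : ℕ) := by
      rw [hIoi, Fin.card_Ioi]
    rw [← hc]
    simp only [Finset.card_filter]
    rw [← Finset.sum_add_distrib, ← Finset.sum_add_distrib]
    refine Finset.sum_congr rfl fun i _ => ?_
    by_cases hoi : o < i
    · rcases lt_trichotomy (π.w o) (π.w i) with h | h | h
      · simp [hoi, h, h.asymm, h.ne']
      · simp [hoi, ← h]
      · simp [hoi, h, h.asymm, h.ne]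
    · simp [hoi]
  -- Step 2: elements after the opener in the same block, total count
  have hC : ∑ o ∈ O, (univ.filter fun i => o < i ∧ π.w i = π.w o).card = n - (k + 1) := by
    have hswap : ∑ o ∈ O, (univ.filter fun i => o < i ∧ π.w i = π.w o).card
        = ∑ i : Fin n, (O.filter fun o => o < i ∧ π.w i = π.w o).card := by
      simp only [Finset.card_filter]
      exact Finset.sum_comm
    have hpt2 : ∀ i : Fin n,
        (O.filter fun o => o < i ∧ π.w i = π.w o).card = if i ∈ O then 0 else 1 := by
      intro i
      by_cases hi : i ∈ O
      · have hop : ∀ j, j < i → π.w j ≠ π.w i := by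
          rw [← hπ] at hi
          simpa [SetPartition.openers] using hi
        rw [if_pos hi, Finset.card_eq_zero, Finset.filter_eq_empty_iff]
        rintro o _ ⟨h1, h2⟩
        exact hop o h1 h2.symm
      · have hnop : ∃ j, j < i ∧ π.w j = π.w i := by
          rw [← hπ] at hi
          simp only [SetPartition.openers, Finset.mem_filter, Finset.mem_univ,
            true_and, not_forall] at hi
          obtain ⟨j, hj⟩ := hi
          exact ⟨j, by tauto⟩
        obtain ⟨j, hj1, hj2⟩ := hnop
        set T : Finset (Fin n) := univ.filter fun a => π.w a = π.w i with hT
        have hTne : T.Nonempty := ⟨j, by simp [hT, hj2]⟩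
        set m : Fin n := T.min' hTne with hm
        have hmT : m ∈ T := T.min'_mem hTne
        have hwm : π.w m = π.w i := by simpa [hT] using hmT
        have hmle : m ≤ j := T.min'_le j (by simp [hT, hj2])
        have hmi : m < i := lt_of_le_of_lt hmle hj1
        have hmop : ∀ a, a < m → π.w a ≠ π.w m := by
          intro a ha hwa
          exact absurd (T.min'_le a (by simp [hT, hwa.trans hwm])) (not_le.2 ha)
        have hmO : m ∈ O := by
          rw [← hπ]
          simpa [SetPartition.openers] using hmop
        rw [if_neg hi]
        rw [Finset.card_eq_one]
        refine ⟨m, ?_⟩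
        ext o
        simp only [Finset.mem_filter, Finset.mem_singleton]
        constructor
        · rintro ⟨hoO, h1, h2⟩
          have hoop : ∀ a, a < o → π.w a ≠ π.w o := by
            rw [← hπ] at hoO
            simpa [SetPartition.openers] using hoO
          by_contra hne
          rcases lt_or_gt_of_ne hne with h | h
          · exact hmop o h (by rw [← h2, hwm])
          · exact hoop m h (by rw [hwm, h2])
        · rintro rfl
          exact ⟨hmO, hmi, hwm.symm⟩
    rw [hswap, Finset.sum_congr rfl fun i _ => hpt2 i]
    have : (∑ i : Fin n, if i ∈ O then 0 else 1)
        = (univ.filter fun i : Fin n => ¬ (i ∈ O)).card := by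
      rw [Finset.card_filter]
      refine Finset.sum_congr rfl fun i _ => ?_
      by_cases hi : i ∈ O <;> simp [hi]
    rw [this]
    have hcompl : (univ.filter fun i : Fin n => ¬ (i ∈ O)) = Oᶜ := by
      ext i; simp
    rw [hcompl]
    have := Finset.card_compl O
    simp only [Fintype.card_fin] at this
    omega
  -- assemble
  have hsum1 : π.los + π.linvSet O + (n - (k + 1)) = ∑ o ∈ O, (n - 1 - (o : ℕ)) := by
    rw [hlos, ← hC]
    unfold SetPartition.linvSet SetPartition.linv
    rw [← Finset.sum_add_distrib, ← Finset.sum_add_distrib]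
    exact Finset.sum_congr rfl fun o _ => hpt o
  set z : Fin n := ⟨0, by omega⟩ with hz
  have hS1 : ∑ o ∈ O, (n - 1 - (o : ℕ))
      = (n - 1) + ∑ o ∈ O.erase z, (n - 1 - (o : ℕ)) := by
    rw [← Finset.add_sum_erase O _ hO1]
    congr 1
  have hcardE : (O.erase z).card = k := by
    rw [Finset.card_erase_of_mem hO1, hOcard]
    omega

  have hT2 : ∑ x ∈ O.erase z, (n - (x : ℕ))
      = (∑ x ∈ O.erase z, (n - 1 - (x : ℕ))) + k := by
    rw [← hcardE, Finset.card_eq_sum_ones, ← Finset.sum_add_distrib]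
    refine Finset.sum_congr rfl fun x _ => ?_
    have := x.isLt
    omega
  omega
end
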